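/- Let κ be an uncountable cardinal and let A and B be structures (over a common first-order language) that are strongly κ-partially isomorphic, with |A| = |B| = κ. Then A and B are isomorphic. -/

import Mathlib

universe u

open FirstOrder Cardinal

variable (L : FirstOrder.Language.{u, u})

/-- A partial isomorphism from `A` to `B`: an isomorphism between a substructure of `A`
and a substructure of `B`. -/
structure LPartialIso (A B : Type u) [L.Structure A] [L.Structure B] where
  dom : L.Substructure A
  ran : L.Substructure B
  equiv : dom ≃[L] ran

variable {A B : Type u} [L.Structure A] [L.Structure B]

/-- `g` extends `f` as a partial isomorphism (`f ⊆ g` as sets of pairs). -/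
def LPartialIso.Extends (f g : LPartialIso L A B) : Prop :=
  ∃ h : f.dom ≤ g.dom, ∀ x : f.dom,
    (g.equiv ⟨x.1, SetLike.le_def.mp h x.2⟩ : B) = (f.equiv x : B)

/-- `I` witnesses that `A` and `B` are strongly `κ`-partially isomorphic:
(i) each `f ∈ I` extends to cover any subset of `A` of size `< κ` in its domain;
(ii) each `f ∈ I` extends to cover any subset of `B` of size `< κ` in its range;
(iii) `I` is closed under unions of chains of length `< cf(κ)`. -/
def IsStrongWitness (κ : Cardinal.{u}) (I : Set (LPartialIso L A B)) : Prop :=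
  (∀ f ∈ I, ∀ X : Set A, #X < κ →
    ∃ g ∈ I, f.Extends L g ∧ X ⊆ (g.dom : Set A)) ∧
  (∀ f ∈ I, ∀ Y : Set B, #Y < κ →
    ∃ g ∈ I, f.Extends L g ∧ Y ⊆ (g.ran : Set B)) ∧
  (∀ (ι : Type u) (_ : LinearOrder ι), Nonempty ι → #ι < (Cardinal.ord κ).cof →
    ∀ c : ι → LPartialIso L A B, (∀ i, c i ∈ I) →
      (∀ i j, i ≤ j → (c i).Extends L (c j)) →
      ∃ g ∈ I, (∀ i, (c i).Extends L g) ∧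
        (g.dom : Set A) = ⋃ i, ((c i).dom : Set A))

/-- `A` and `B` are strongly `κ`-partially isomorphic. -/
def StronglyPartiallyIsomorphic (κ : Cardinal.{u}) (A B : Type u)
    [L.Structure A] [L.Structure B] : Prop :=
  ∃ I : Set (LPartialIso L A B), I.Nonempty ∧ IsStrongWitness L κ I

/-- Strongly `κ`-partially isomorphic structures of cardinality `κ` (for uncountable `κ`)
are isomorphic. -/
theorem LPartialIso.extends_rfl (f : LPartialIso L A B) : f.Extends L f :=
  ⟨le_rfl, fun _ => rfl⟩

theorem LPartialIso.Extends.trans' {f g h : LPartialIso L A B}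
    (h1 : f.Extends L g) (h2 : g.Extends L h) : f.Extends L h := by
  obtain ⟨le1, v1⟩ := h1
  obtain ⟨le2, v2⟩ := h2
  exact ⟨le1.trans le2, fun x =>
    (v2 ⟨x.1, SetLike.le_def.mp le1 x.2⟩).trans (v1 x)⟩

open Classical in
noncomputable def chainG (I : Set (LPartialIso L A B)) (f₀ : LPartialIso L A B)
    (X : Ordinal.{u} → Set A) (Y : Ordinal.{u} → Set B) (α : Ordinal.{u}) :
    LPartialIso L A B :=
  if h : ∃ g, g ∈ I ∧ f₀.Extends L g ∧
      (∀ β, β < α → (chainG I f₀ X Y β).Extends L g) ∧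
      X α ⊆ (g.dom : Set A) ∧ Y α ⊆ (g.ran : Set B)
  then h.choose else f₀
termination_by α
decreasing_by all_goals assumption

theorem chainG_spec {κ : Cardinal.{u}} {I : Set (LPartialIso L A B)} {f₀ : LPartialIso L A B}
    (hf₀ : f₀ ∈ I) (hW : IsStrongWitness L κ I)
    {X : Ordinal.{u} → Set A} {Y : Ordinal.{u} → Set B}
    (hX : ∀ α, α < (Cardinal.ord κ).cof.ord → #(X α) < κ)
    (hY : ∀ α, α < (Cardinal.ord κ).cof.ord → #(Y α) < κ) :
    ∀ α, α < (Cardinal.ord κ).cof.ord →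
      chainG L I f₀ X Y α ∈ I ∧
      f₀.Extends L (chainG L I f₀ X Y α) ∧
      (∀ β, β < α → (chainG L I f₀ X Y β).Extends L (chainG L I f₀ X Y α)) ∧
      X α ⊆ ((chainG L I f₀ X Y α).dom : Set A) ∧
      Y α ⊆ ((chainG L I f₀ X Y α).ran : Set B) := by
  obtain ⟨W1, W2, W3⟩ := hW
  intro α
  induction α using Ordinal.induction with
  | h α IH =>
  intro hα
  have hbase : ∃ g1, g1 ∈ I ∧ f₀.Extends L g1 ∧
      ∀ β, β < α → (chainG L I f₀ X Y β).Extends L g1 := by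
    rcases eq_or_ne α 0 with rfl | hne
    · exact ⟨f₀, hf₀, f₀.extends_rfl L, fun β hβ => absurd hβ (not_lt_zero (a := β))⟩
    · have hne' : Nonempty α.ToType := Ordinal.toType_nonempty_iff_ne_zero.2 hne
      set e := Ordinal.ToType.mk (o := α) with he
      have hcard : #α.ToType < (Cardinal.ord κ).cof := by
        rw [Cardinal.mk_toType]; exact Cardinal.lt_ord.1 hα
      set cc : α.ToType → LPartialIso L A B :=
        fun i => chainG L I f₀ X Y (e.symm i).1 with hcc
      have hlt : ∀ i, ((e.symm i).1) < α := fun i => (e.symm i).2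
      have hmem : ∀ i, cc i ∈ I := fun i => (IH _ (hlt i) ((hlt i).trans hα)).1
      have hchain : ∀ i j, i ≤ j → (cc i).Extends L (cc j) := by
        intro i j hij
        have h2 : (e.symm i).1 ≤ (e.symm j).1 := by
          exact_mod_cast e.symm.monotone hij
        rcases h2.lt_or_eq with hlt2 | heq
        · exact (IH _ (hlt j) ((hlt j).trans hα)).2.2.1 _ hlt2
        · simp only [hcc, heq]
          exact (chainG L I f₀ X Y _).extends_rfl L
      obtain ⟨g1, hg1I, hg1ext, -⟩ := W3 α.ToType inferInstance hne' hcard cc hmem hchain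
      refine ⟨g1, hg1I, ?_, ?_⟩
      · obtain ⟨i0⟩ := hne'
        exact ((IH _ (hlt i0) ((hlt i0).trans hα)).2.1).trans' L (hg1ext i0)
      · intro β hβ
        have hcb : cc (e ⟨β, hβ⟩) = chainG L I f₀ X Y β := by
          simp only [hcc, OrderIso.symm_apply_apply]
        exact hcb ▸ hg1ext (e ⟨β, hβ⟩)
  obtain ⟨g1, hg1I, hg1f, hg1c⟩ := hbase
  obtain ⟨g2, hg2I, hg12, hg2X⟩ := W1 g1 hg1I (X α) (hX α hα)
  obtain ⟨g3, hg3I, hg23, hg3Y⟩ := W2 g2 hg2I (Y α) (hY α hα)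
  have hex : ∃ g, g ∈ I ∧ f₀.Extends L g ∧
      (∀ β, β < α → (chainG L I f₀ X Y β).Extends L g) ∧
      X α ⊆ (g.dom : Set A) ∧ Y α ⊆ (g.ran : Set B) := by
    have hle := hg23.choose
    exact ⟨g3, hg3I, hg1f.trans' L (hg12.trans' L hg23),
      fun β hβ => (hg1c β hβ).trans' L (hg12.trans' L hg23),
      fun a ha => hle (hg2X ha), hg3Y⟩
  have heq : chainG L I f₀ X Y α = hex.choose := by
    rw [chainG]
    exact dif_pos hex
  rw [heq]
  exact hex.choose_spec

theorem stmt_6 (κ : Cardinal.{u}) (hκ : Cardinal.aleph0 < κ)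
    (A B : Type u) [L.Structure A] [L.Structure B]
    (hA : #A = κ) (hB : #B = κ)
    (h : StronglyPartiallyIsomorphic L κ A B) : Nonempty (A ≃[L] B) := by
  classical
  obtain ⟨I, ⟨f₀, hf₀⟩, hW⟩ := h
  set c : Cardinal.{u} := (Cardinal.ord κ).cof with hcdef
  have hℵc : Cardinal.aleph0 ≤ c := Ordinal.aleph0_le_cof.2 (Cardinal.isSuccLimit_ord hκ.le)
  have hcord0 : (0 : Ordinal.{u}) < c.ord := by
    rw [Cardinal.lt_ord, Ordinal.card_zero]
    exact lt_of_lt_of_le Cardinal.aleph0_pos hℵc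
  have hordne : Cardinal.ord κ ≠ 0 := by
    rw [Ne, Cardinal.ord_eq_zero]
    exact (Cardinal.aleph0_pos.trans hκ).ne'
  have hTcard : #(Cardinal.ord κ).ToType = κ := by
    rw [Cardinal.mk_toType, Cardinal.card_ord]
  have hTtype := Ordinal.type_toType (Cardinal.ord κ)
  obtain ⟨eqA⟩ : Nonempty (A ≃ (Cardinal.ord κ).ToType) :=
    Cardinal.eq.1 (hA.trans hTcard.symm)
  obtain ⟨eqB⟩ : Nonempty (B ≃ (Cardinal.ord κ).ToType) :=
    Cardinal.eq.1 (hB.trans hTcard.symm)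
  obtain ⟨S, hSunb, hScard⟩ :=
    Order.exists_cof_eq (α := (Cardinal.ord κ).ToType)
  rw [Ordinal.cof_toType] at hScard
  obtain ⟨bijS⟩ : Nonempty (c.ord.ToType ≃ S) := by
    refine Cardinal.eq.1 ?_
    rw [Cardinal.mk_toType, Cardinal.card_ord, hScard]
  have hTne : Nonempty (Cardinal.ord κ).ToType := Ordinal.toType_nonempty_iff_ne_zero.2 hordne
  set sfun : Ordinal.{u} → (Cardinal.ord κ).ToType := fun α =>
    if h : α < c.ord then (bijS ((Ordinal.ToType.mk (o := c.ord)) ⟨α, h⟩) : (Cardinal.ord κ).ToType)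
    else hTne.some with hsfun
  set X : Ordinal.{u} → Set A := fun α => eqA ⁻¹' Set.Iic (sfun α) with hXdef
  set Y : Ordinal.{u} → Set B := fun α => eqB ⁻¹' Set.Iic (sfun α) with hYdef
  -- size bounds
  have hIic : ∀ t : (Cardinal.ord κ).ToType, #(Set.Iic t) < κ := by
    intro t
    have h1 : #(Set.Iio t) < κ := Cardinal.mk_Iio_ord_toType t
    calc #(Set.Iic t) = #(insert t (Set.Iio t) : Set (Cardinal.ord κ).ToType) := by rw [Set.Iio_insert]
      _ ≤ #(Set.Iio t) + 1 := Cardinal.mk_insert_le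
      _ < κ := Cardinal.add_lt_of_lt hκ.le h1
          (lt_of_lt_of_le Cardinal.one_lt_aleph0 hκ.le)
  have hpre : ∀ (γ : Type u) (e : γ ≃ (Cardinal.ord κ).ToType) (s : Set (Cardinal.ord κ).ToType), #(e ⁻¹' s) = #s := by
    intro γ e s
    have he := e.symm.image_eq_preimage_symm s
    rw [Equiv.symm_symm] at he
    rw [← he]
    exact Cardinal.mk_image_eq e.symm.injective
  have hX : ∀ α, α < c.ord → #(X α) < κ := fun α _ => by
    rw [hXdef]; rw [hpre A eqA]; exact hIic _
  have hY : ∀ α, α < c.ord → #(Y α) < κ := fun α _ => by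
    rw [hYdef]; rw [hpre B eqB]; exact hIic _
  -- covering
  have hsval : ∀ (t : (Cardinal.ord κ).ToType) (ht : t ∈ S), ∃ α, α < c.ord ∧ sfun α = t := by
    intro t ht
    set p := (Ordinal.ToType.mk (o := c.ord)).symm (bijS.symm ⟨t, ht⟩) with hp
    refine ⟨p.1, p.2, ?_⟩
    rw [hsfun]
    simp only
    rw [dif_pos (show (p : Ordinal.{u}) < c.ord from p.2)]
    show (bijS ((Ordinal.ToType.mk (o := c.ord)) p) : (Cardinal.ord κ).ToType) = t
    rw [hp, OrderIso.apply_symm_apply, Equiv.apply_symm_apply]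
  have hcovA : ∀ a : A, ∃ α, α < c.ord ∧ a ∈ X α := by
    intro a
    obtain ⟨s, hsS, hs⟩ := hSunb (eqA a)
    obtain ⟨α, hα, hval⟩ := hsval s hsS
    exact ⟨α, hα, by rw [hXdef]; simpa [hval] using hs⟩
  have hcovB : ∀ b : B, ∃ α, α < c.ord ∧ b ∈ Y α := by
    intro b
    obtain ⟨s, hsS, hs⟩ := hSunb (eqB b)
    obtain ⟨α, hα, hval⟩ := hsval s hsS
    exact ⟨α, hα, by rw [hYdef]; simpa [hval] using hs⟩
  -- the chain
  set G : Ordinal.{u} → LPartialIso L A B := fun α => chainG L I f₀ X Y α with hGdef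
  have spec := chainG_spec L hf₀ hW hX hY
  have hext : ∀ {α γ}, α < c.ord → γ < c.ord → α ≤ γ → (G α).Extends L (G γ) := by
    intro α γ hα hγ hle
    rcases hle.lt_or_eq with hlt | rfl
    · exact (spec γ hγ).2.2.1 α hlt
    · exact (G α).extends_rfl L
  have hdom : ∀ {α γ}, α < c.ord → γ < c.ord → α ≤ γ → ∀ {a : A},
      a ∈ (G α).dom → a ∈ (G γ).dom := by
    intro α γ hα hγ hle a ha
    exact SetLike.le_def.mp (hext hα hγ hle).choose ha
  have hval : ∀ {α γ} (hα : α < c.ord) (hγ : γ < c.ord) {a : A}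
      (h1 : a ∈ (G α).dom) (h2 : a ∈ (G γ).dom),
      ((G α).equiv ⟨a, h1⟩ : B) = ((G γ).equiv ⟨a, h2⟩ : B) := by
    intro α γ hα hγ a h1 h2
    rcases le_total α γ with hle | hle
    · obtain ⟨hd, hv⟩ := hext hα hγ hle
      exact (hv ⟨a, h1⟩).symm
    · obtain ⟨hd, hv⟩ := hext hγ hα hle
      exact hv ⟨a, h2⟩
  have hdomcov : ∀ a : A, ∃ α, α < c.ord ∧ a ∈ (G α).dom := by
    intro a
    obtain ⟨α, hα, ha⟩ := hcovA a
    exact ⟨α, hα, (spec α hα).2.2.2.1 ha⟩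
  choose idx hidx1 hidx2 using hdomcov
  set F : A → B := fun a => ((G (idx a)).equiv ⟨a, hidx2 a⟩ : B) with hFdef
  have hF : ∀ {γ} (hγ : γ < c.ord) {a : A} (h2 : a ∈ (G γ).dom),
      F a = ((G γ).equiv ⟨a, h2⟩ : B) := by
    intro γ hγ a h2
    exact hval (hidx1 _) hγ (hidx2 _) h2
  have hinj : Function.Injective F := by
    intro a a' hFe
    have hγ : max (idx a) (idx a') < c.ord := max_lt (hidx1 a) (hidx1 a')
    have h1 : a ∈ (G (max (idx a) (idx a'))).dom :=
      hdom (hidx1 a) hγ (le_max_left _ _) (hidx2 a)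
    have h1' : a' ∈ (G (max (idx a) (idx a'))).dom :=
      hdom (hidx1 a') hγ (le_max_right _ _) (hidx2 a')
    rw [hF hγ h1, hF hγ h1'] at hFe
    have h2 := (G (max (idx a) (idx a'))).equiv.injective (Subtype.coe_injective hFe)
    exact congrArg Subtype.val h2
  have hsurj : Function.Surjective F := by
    intro b
    obtain ⟨α, hα, hb⟩ := hcovB b
    have hbran : b ∈ (G α).ran := (spec α hα).2.2.2.2 hb
    obtain ⟨x, hx⟩ := (G α).equiv.toEquiv.surjective ⟨b, hbran⟩
    refine ⟨x.1, ?_⟩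
    rw [hF hα x.2]
    rw [show (⟨x.1, x.2⟩ : (G α).dom) = x from rfl]
    exact congrArg Subtype.val hx
  refine ⟨⟨Equiv.ofBijective F ⟨hinj, hsurj⟩, ?_, ?_⟩⟩
  · intro n f as
    show F (Language.Structure.funMap f as) = Language.Structure.funMap f (F ∘ as)
    obtain ⟨γ, hγ, hle⟩ : ∃ γ, γ < c.ord ∧ ∀ i, idx (as i) ≤ γ :=
      ⟨(Finset.univ : Finset (Fin n)).sup fun i => idx (as i),
        (Finset.sup_lt_iff hcord0).2 fun i _ => hidx1 (as i),
        fun i => Finset.le_sup (f := fun i => idx (as i)) (Finset.mem_univ i)⟩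
    have hasmem : ∀ i, as i ∈ (G γ).dom := fun i =>
      hdom (hidx1 _) hγ (hle i) (hidx2 _)
    have hfm : Language.Structure.funMap f as ∈ (G γ).dom :=
      (G γ).dom.fun_mem f as fun i => hasmem i
    rw [hF hγ hfm]
    have h1 : (⟨Language.Structure.funMap f as, hfm⟩ : (G γ).dom) =
        Language.Structure.funMap f (fun i => (⟨as i, hasmem i⟩ : (G γ).dom)) := rfl
    rw [h1, (G γ).equiv.map_fun]
    show Language.Structure.funMap f (fun i => ((G γ).equiv ⟨as i, hasmem i⟩ : B)) = _
    congr 1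
    funext i
    exact (hF hγ (hasmem i)).symm
  · intro n r as
    show Language.Structure.RelMap r (F ∘ as) ↔ Language.Structure.RelMap r as
    obtain ⟨γ, hγ, hle⟩ : ∃ γ, γ < c.ord ∧ ∀ i, idx (as i) ≤ γ :=
      ⟨(Finset.univ : Finset (Fin n)).sup fun i => idx (as i),
        (Finset.sup_lt_iff hcord0).2 fun i _ => hidx1 (as i),
        fun i => Finset.le_sup (f := fun i => idx (as i)) (Finset.mem_univ i)⟩
    have hasmem : ∀ i, as i ∈ (G γ).dom := fun i =>
      hdom (hidx1 _) hγ (hle i) (hidx2 _)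
    have h1 : (F ∘ as) = fun i => ((G γ).equiv ⟨as i, hasmem i⟩ : B) :=
      funext fun i => hF hγ (hasmem i)
    rw [h1]
    exact (G γ).equiv.map_rel r fun i => (⟨as i, hasmem i⟩ : (G γ).dom)
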